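/- Let H be a Hilbert space and P, Q orthogonal projections on H. Then the sequence (P Q P)^n converges in the strong operator topology to the orthogonal projection onto the intersection of the ranges of P and Q (i.e., to P ∧ Q). -/

import Mathlib

open Filter RCLike ContinuousLinearMap

section Aux

variable {H : Type*} [NormedAddCommGroup H] [InnerProductSpace ℂ H] [CompleteSpace H]

local notation "⟪" x ", " y "⟫" => @inner ℂ _ _ x y

private lemma aux_symm {A : H →L[ℂ] H} (hA : IsSelfAdjoint A) (x y : H) :
    ⟪A x, y⟫ = ⟪x, A y⟫ :=
  (ContinuousLinearMap.isSelfAdjoint_iff_isSymmetric.mp hA) x y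

private lemma aux_proj_inner {A : H →L[ℂ] H} (hA : IsIdempotentElem A)
    (hA' : IsSelfAdjoint A) (x : H) : ⟪A x, x⟫ = ((‖A x‖ : ℂ) ^ 2) := by
  have h1 : A (A x) = A x := by
    conv_rhs => rw [← hA.eq]
    simp [ContinuousLinearMap.mul_apply]
  calc ⟪A x, x⟫ = ⟪A (A x), x⟫ := by rw [h1]
    _ = ⟪A x, A x⟫ := aux_symm hA' (A x) x
    _ = ((‖A x‖ : ℂ) ^ 2) := inner_self_eq_norm_sq_to_K (A x)

private lemma aux_proj_re_inner {A : H →L[ℂ] H} (hA : IsIdempotentElem A)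
    (hA' : IsSelfAdjoint A) (x : H) : re ⟪A x, x⟫ = ‖A x‖ ^ 2 := by
  rw [aux_proj_inner hA hA']
  norm_cast

private lemma aux_proj_norm_le {A : H →L[ℂ] H} (hA : IsIdempotentElem A)
    (hA' : IsSelfAdjoint A) (x : H) : ‖A x‖ ≤ ‖x‖ := by
  have h1 : ‖A x‖ ^ 2 = re ⟪A x, x⟫ := (aux_proj_re_inner hA hA' x).symm
  have h2 : re ⟪A x, x⟫ ≤ ‖(⟪A x, x⟫ : ℂ)‖ := re_le_norm _
  have h3 : ‖(⟪A x, x⟫ : ℂ)‖ ≤ ‖A x‖ * ‖x‖ := norm_inner_le_norm _ _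
  rcases eq_or_lt_of_le (norm_nonneg (A x)) with h | h
  · rw [← h]; exact norm_nonneg x
  · have := h1 ▸ (h2.trans h3)
    rw [pow_two] at this
    exact le_of_mul_le_mul_left this h

private lemma aux_proj_eq_of_norm {A : H →L[ℂ] H} (hA : IsIdempotentElem A)
    (hA' : IsSelfAdjoint A) {x : H} (h : ‖A x‖ = ‖x‖) : A x = x := by
  have h1 : ‖x - A x‖ ^ 2 = ‖x‖ ^ 2 - 2 * re ⟪x, A x⟫ + ‖A x‖ ^ 2 := norm_sub_sq x (A x)
  have h2 : re ⟪x, A x⟫ = ‖A x‖ ^ 2 := by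
    rw [← inner_conj_symm, aux_proj_inner hA hA']
    norm_cast
  have h3 : ‖x - A x‖ ^ 2 = 0 := by rw [h1, h2, h]; ring
  have h4 : x - A x = 0 := by
    rwa [pow_eq_zero_iff (two_ne_zero), norm_eq_zero] at h3
  exact (sub_eq_zero.mp h4).symm

private lemma aux_mem_range_iff {A : H →L[ℂ] H} (hA : IsIdempotentElem A) (x : H) :
    x ∈ LinearMap.range (A : H →ₗ[ℂ] H) ↔ A x = x := by
  constructor
  · rintro ⟨y, rfl⟩
    conv_rhs => rw [← hA.eq]
    simp [ContinuousLinearMap.mul_apply]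
  · intro h
    exact ⟨x, h⟩

end Aux

open Filter in
/-- for orthogonal projections `P, Q` on a Hilbert space, `(PQP)^n` converges
in the strong operator topology to the orthogonal projection `P ∧ Q` onto
`ran(P) ∩ ran(Q)`. -/
theorem pqp_pow_tendsto_inf_projection {H : Type*} [NormedAddCommGroup H]
    [InnerProductSpace ℂ H] [CompleteSpace H]
    (P Q : H →L[ℂ] H) (hP : IsIdempotentElem P) (hP' : IsSelfAdjoint P)
    (hQ : IsIdempotentElem Q) (hQ' : IsSelfAdjoint Q) :
    ∃ R : H →L[ℂ] H, IsIdempotentElem R ∧ IsSelfAdjoint R ∧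
      LinearMap.range (R : H →ₗ[ℂ] H) = LinearMap.range (P : H →ₗ[ℂ] H) ⊓ LinearMap.range (Q : H →ₗ[ℂ] H) ∧
      ∀ x : H, Tendsto (fun n : ℕ => ((P * Q * P) ^ n) x) atTop (nhds (R x)) := by
  set T : H →L[ℂ] H := P * Q * P with hT
  -- `T` is self-adjoint
  have hTsa : IsSelfAdjoint T := by
    simp only [hT, IsSelfAdjoint, star_mul, hP'.star_eq, hQ'.star_eq, mul_assoc]
  -- `0 ≤ T`
  have hT0 : (0 : H →L[ℂ] H) ≤ T := by
    have key : star (Q * P) * (Q * P) = T := by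
      rw [star_mul, hP'.star_eq, hQ'.star_eq, ← mul_assoc, mul_assoc P Q Q, hQ.eq, hT]
    exact key ▸ star_mul_self_nonneg (Q * P)
  -- `T ≤ 1`
  have hT1 : T ≤ 1 := by
    have hA1 : (0 : H →L[ℂ] H) ≤ 1 - P := by
      have key : star (1 - P) * (1 - P) = 1 - P := by
        rw [star_sub, star_one, hP'.star_eq, hP.one_sub.eq]
      exact key ▸ star_mul_self_nonneg (1 - P)
    have hA2 : (0 : H →L[ℂ] H) ≤ P * (1 - Q) * P := by
      have key : star ((1 - Q) * P) * ((1 - Q) * P) = P * (1 - Q) * P := by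
        rw [star_mul, hP'.star_eq, star_sub, star_one, hQ'.star_eq, ← mul_assoc,
          mul_assoc P (1 - Q) (1 - Q), hQ.one_sub.eq]
      exact key ▸ star_mul_self_nonneg ((1 - Q) * P)
    rw [← sub_nonneg]
    have hdecomp : (1 : H →L[ℂ] H) - T = (1 - P) + P * (1 - Q) * P := by
      have h' : P * (1 - Q) * P = P - T := by
        rw [hT, mul_sub, mul_one, sub_mul, hP.eq]
      rw [h']; abel
    rw [hdecomp]
    exact add_nonneg hA1 hA2
  have hanti : Antitone (T ^ · : ℕ → H →L[ℂ] H) := CStarAlgebra.pow_antitone hT0 hT1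
  have hpow0 : ∀ n : ℕ, (0 : H →L[ℂ] H) ≤ T ^ n := fun n => CStarAlgebra.pow_nonneg hT0 n
  -- inner product identity
  have hin : ∀ (x : H) (n m : ℕ),
      (inner ℂ ((T ^ n) x) ((T ^ m) x) : ℂ) = inner ℂ ((T ^ (n + m)) x) x := by
    intro x n m
    rw [← aux_symm (hTsa.pow m) ((T ^ n) x) x, ← ContinuousLinearMap.mul_apply, ← pow_add,
      add_comm m n]
  -- the scalar sequences
  have hcanti : ∀ x : H, Antitone (fun n : ℕ => re (inner ℂ ((T ^ n) x) x : ℂ)) := by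
    intro x n m hnm
    have hle := hanti hnm
    rw [ContinuousLinearMap.le_def] at hle
    have h0 := hle.re_inner_nonneg_left x
    simp only [ContinuousLinearMap.sub_apply, inner_sub_left, map_sub] at h0
    exact sub_nonneg.mp h0
  have hcnn : ∀ (x : H) (n : ℕ), 0 ≤ re (inner ℂ ((T ^ n) x) x : ℂ) := fun x n =>
    ((ContinuousLinearMap.nonneg_iff_isPositive _).mp (hpow0 n)).re_inner_nonneg_left x
  -- norms of iterates are bounded by the norm of the point
  have hTn_le : ∀ (n : ℕ) (x : H), ‖(T ^ n) x‖ ≤ ‖x‖ := by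
    intro n x
    have h1 : re (inner ℂ ((T ^ (n + n)) x) x : ℂ) ≤ re (inner ℂ ((T ^ 0) x) x : ℂ) :=
      hcanti x (Nat.zero_le _)
    have h2 : ‖(T ^ n) x‖ ^ 2 = re (inner ℂ ((T ^ (n + n)) x) x : ℂ) := by
      rw [← inner_self_eq_norm_sq (𝕜 := ℂ), hin x n n]
    have h3 : re (inner ℂ ((T ^ 0) x) x : ℂ) = ‖x‖ ^ 2 := by
      simp only [pow_zero, ContinuousLinearMap.one_apply]
      exact inner_self_eq_norm_sq x
    nlinarith [norm_nonneg ((T ^ n) x), norm_nonneg x]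
  -- the norm-difference formula
  have hnormsq : ∀ (x : H) (n m : ℕ), ‖(T ^ n) x - (T ^ m) x‖ ^ 2 =
      re (inner ℂ ((T ^ (n + n)) x) x : ℂ) + re (inner ℂ ((T ^ (m + m)) x) x : ℂ)
        - 2 * re (inner ℂ ((T ^ (n + m)) x) x : ℂ) := by
    intro x n m
    have e1 : ‖(T ^ n) x‖ ^ 2 = re (inner ℂ ((T ^ (n + n)) x) x : ℂ) := by
      rw [← inner_self_eq_norm_sq (𝕜 := ℂ), hin x n n]
    have e2 : ‖(T ^ m) x‖ ^ 2 = re (inner ℂ ((T ^ (m + m)) x) x : ℂ) := by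
      rw [← inner_self_eq_norm_sq (𝕜 := ℂ), hin x m m]
    have e3 : re (inner ℂ ((T ^ n) x) ((T ^ m) x) : ℂ) = re (inner ℂ ((T ^ (n + m)) x) x : ℂ) := by
      rw [hin x n m]
    rw [norm_sub_sq (𝕜 := ℂ), e1, e2, e3]
    ring
  -- the sequence of iterates is Cauchy
  have hcauchy : ∀ x : H, CauchySeq (fun n : ℕ => (T ^ n) x) := by
    intro x
    set c : ℕ → ℝ := fun n => re (inner ℂ ((T ^ n) x) x : ℂ) with hc
    obtain ⟨L, hL⟩ : ∃ L : ℝ, Tendsto c atTop (nhds L) :=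
      ⟨_, tendsto_atTop_ciInf (hcanti x) ⟨0, by rintro - ⟨n, rfl⟩; exact hcnn x n⟩⟩
    rw [Metric.cauchySeq_iff]
    intro ε hε
    obtain ⟨N, hN⟩ := (Metric.tendsto_atTop.mp hL) (ε ^ 2 / 4) (by positivity)
    refine ⟨N, fun m hm n hn => ?_⟩
    rw [dist_eq_norm]
    have h2m : |c (m + m) - L| < ε ^ 2 / 4 := by
      simpa [Real.dist_eq] using hN (m + m) (by omega)
    have h2n : |c (n + n) - L| < ε ^ 2 / 4 := by
      simpa [Real.dist_eq] using hN (n + n) (by omega)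
    have hmn : |c (m + n) - L| < ε ^ 2 / 4 := by
      simpa [Real.dist_eq] using hN (m + n) (by omega)
    have hsq : ‖(T ^ m) x - (T ^ n) x‖ ^ 2 < ε ^ 2 := by
      rw [hnormsq x m n]
      have a1 := abs_lt.mp h2m
      have a2 := abs_lt.mp h2n
      have a3 := abs_lt.mp hmn
      simp only [hc] at a1 a2 a3 ⊢
      linarith [a1.1, a1.2, a2.1, a2.2, a3.1, a3.2]
    nlinarith [norm_nonneg ((T ^ m) x - (T ^ n) x)]
  -- the pointwise limit
  choose f hf using fun x : H => cauchySeq_tendsto_of_complete (hcauchy x)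
  have hbound : ∀ x : H, ‖f x‖ ≤ ‖x‖ := fun x =>
    le_of_tendsto (hf x).norm (Filter.Eventually.of_forall fun n => hTn_le n x)
  have hadd : ∀ x y : H, f (x + y) = f x + f y := by
    intro x y
    refine tendsto_nhds_unique (hf (x + y)) ?_
    exact Tendsto.congr (fun n => ((T ^ n).map_add x y).symm) ((hf x).add (hf y))
  have hsmul : ∀ (a : ℂ) (x : H), f (a • x) = a • f x := by
    intro a x
    refine tendsto_nhds_unique (hf (a • x)) ?_
    exact Tendsto.congr (fun n => ((T ^ n).map_smul a x).symm) ((hf x).const_smul a)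
  let flin : H →ₗ[ℂ] H :=
    { toFun := f, map_add' := hadd, map_smul' := hsmul }
  let R : H →L[ℂ] H := LinearMap.mkContinuous flin 1 (fun x => by rw [one_mul]; exact hbound x)
  -- the limit is fixed by `T`
  have hTfix : ∀ x : H, T (f x) = f x := by
    intro x
    have h1 : Tendsto (fun n : ℕ => T ((T ^ n) x)) atTop (nhds (T (f x))) :=
      (T.continuous.tendsto (f x)).comp (hf x)
    have h2 : Tendsto (fun n : ℕ => T ((T ^ n) x)) atTop (nhds (f x)) := by
      have h3 := (hf x).comp (tendsto_add_atTop_nat 1)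
      exact h3.congr fun n => by
        simp only [Function.comp_apply, pow_succ', ContinuousLinearMap.mul_apply]
    exact tendsto_nhds_unique h1 h2
  have hfix_f : ∀ y : H, T y = y → f y = y := by
    intro y hy
    have hn : ∀ n : ℕ, (T ^ n) y = y := by
      intro n
      induction n with
      | zero => simp
      | succ k ih => rw [pow_succ, ContinuousLinearMap.mul_apply, hy, ih]
    refine tendsto_nhds_unique (hf y) ?_
    simp only [hn]
    exact tendsto_const_nhds
  have hRidem : IsIdempotentElem R := by
    rw [IsIdempotentElem]
    ext x
    show f (f x) = f x
    exact hfix_f (f x) (hTfix x)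
  have hRsa : IsSelfAdjoint R := by
    rw [ContinuousLinearMap.isSelfAdjoint_iff_isSymmetric]
    intro x y
    have h1 : Tendsto (fun n : ℕ => (inner ℂ ((T ^ n) x) y : ℂ)) atTop (nhds (inner ℂ (f x) y)) :=
      (hf x).inner tendsto_const_nhds
    have h2 : Tendsto (fun n : ℕ => (inner ℂ x ((T ^ n) y) : ℂ)) atTop (nhds (inner ℂ x (f y))) :=
      tendsto_const_nhds.inner (hf y)
    have h3 : ∀ n : ℕ, (inner ℂ ((T ^ n) x) y : ℂ) = inner ℂ x ((T ^ n) y) := fun n =>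
      aux_symm (hTsa.pow n) x y
    exact tendsto_nhds_unique h1 (h2.congr fun n => (h3 n).symm)
  -- fixed points of `T` are exactly the common range
  have hfixT_iff : ∀ x : H, T x = x ↔ (P x = x ∧ Q x = x) := by
    intro x
    constructor
    · intro h
      have e2 : (inner ℂ (T x) x : ℂ) = inner ℂ (Q (P x)) (P x) := by
        show (inner ℂ ((P * Q * P) x) x : ℂ) = _
        rw [ContinuousLinearMap.mul_apply, ContinuousLinearMap.mul_apply]
        exact aux_symm hP' (Q (P x)) x
      have e3 : re (inner ℂ (T x) x : ℂ) = ‖Q (P x)‖ ^ 2 := by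
        rw [e2]
        exact aux_proj_re_inner hQ hQ' (P x)
      have e4 : re (inner ℂ (T x) x : ℂ) = ‖x‖ ^ 2 := by
        rw [h]
        exact inner_self_eq_norm_sq x
      have hsq : ‖x‖ ^ 2 = ‖Q (P x)‖ ^ 2 := by rw [← e4, e3]
      have hle1 : ‖Q (P x)‖ ≤ ‖P x‖ := aux_proj_norm_le hQ hQ' (P x)
      have hle2 : ‖P x‖ ≤ ‖x‖ := aux_proj_norm_le hP hP' x
      have hxq : ‖x‖ ≤ ‖Q (P x)‖ := by
        nlinarith [norm_nonneg x, norm_nonneg (Q (P x))]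
      have hPx : P x = x :=
        aux_proj_eq_of_norm hP hP' (le_antisymm hle2 (hxq.trans hle1))
      have hQx : Q x = x := by
        rw [hPx] at hle1 hxq
        exact aux_proj_eq_of_norm hQ hQ' (le_antisymm hle1 hxq)
      exact ⟨hPx, hQx⟩
    · rintro ⟨h1, h2⟩
      show (P * Q * P) x = x
      rw [ContinuousLinearMap.mul_apply, ContinuousLinearMap.mul_apply, h1, h2, h1]
  have hrange : LinearMap.range (R : H →ₗ[ℂ] H) = LinearMap.range (P : H →ₗ[ℂ] H) ⊓ LinearMap.range (Q : H →ₗ[ℂ] H) := by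
    ext x
    simp only [Submodule.mem_inf, aux_mem_range_iff hP, aux_mem_range_iff hQ,
      aux_mem_range_iff hRidem]
    rw [← hfixT_iff x]
    constructor
    · intro h
      rw [← h]
      exact hTfix x
    · intro h
      exact hfix_f x h
  exact ⟨R, hRidem, hRsa, hrange, fun x => hf x⟩
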